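/- arXiv:2306.11668 — 2 statements merged into one kernel-verified Lean document; each statement's English description precedes it below -/
import Mathlib

section
/- Let P be a symmetric real n×n matrix with nonnegative entries. Then the eigenspace of P corresponding to its largest eigenvalue λ₁(P) admits an orthonormal basis consisting of vectors all of whose components are nonnegative. -/
open Matrix Finset

namespace NNB

lemma min_eq_half (a b : ℝ) : min a b = (a + b - |a - b|) / 2 := by
  rcases le_total a b with h | h
  · rw [min_eq_left h, abs_of_nonpos (by linarith)]; ring
  · rw [min_eq_right h, abs_of_nonneg (by linarith)]; ring

variable {n : ℕ}

/-- support of a vector as a finset -/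
noncomputable def supp (x : Fin n → ℝ) : Finset (Fin n) :=
  Finset.univ.filter fun i => x i ≠ 0

lemma mem_supp {x : Fin n → ℝ} {i : Fin n} : i ∈ supp x ↔ x i ≠ 0 := by
  simp [supp]

lemma abs_mem {E : Submodule ℝ (Fin n → ℝ)}
    (hE : ∀ x ∈ E, (fun i => |x i|) ∈ E) {x} (hx : x ∈ E) :
    (fun i => |x i|) ∈ E := hE x hx

lemma pos_part_mem {E : Submodule ℝ (Fin n → ℝ)}
    (hE : ∀ x ∈ E, (fun i => |x i|) ∈ E) {x} (hx : x ∈ E) :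
    (fun i => ((|x i| + x i) / 2)) ∈ E := by
  have := E.smul_mem (1/2 : ℝ) (E.add_mem (hE x hx) hx)
  convert this using 1
  funext i; simp [Pi.smul_apply]; ring

lemma neg_part_mem {E : Submodule ℝ (Fin n → ℝ)}
    (hE : ∀ x ∈ E, (fun i => |x i|) ∈ E) {x} (hx : x ∈ E) :
    (fun i => ((|x i| - x i) / 2)) ∈ E := by
  have := E.smul_mem (1/2 : ℝ) (E.sub_mem (hE x hx) hx)
  convert this using 1
  funext i; simp [Pi.smul_apply]; ring

/-- E contains a nonzero nonnegative vector if it is nonzero. -/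
lemma exists_nonneg_ne_zero {E : Submodule ℝ (Fin n → ℝ)}
    (hE : ∀ x ∈ E, (fun i => |x i|) ∈ E) (hbot : E ≠ ⊥) :
    ∃ u, u ∈ E ∧ u ≠ 0 ∧ ∀ i, 0 ≤ u i := by
  obtain ⟨x, hx, hx0⟩ := Submodule.exists_mem_ne_zero_of_ne_bot hbot
  by_cases hp : (fun i => ((|x i| + x i) / 2)) = 0
  · refine ⟨_, neg_part_mem hE hx, ?_, fun i => by have := le_abs_self (x i); have := neg_abs_le (x i); linarith⟩
    intro h
    apply hx0
    funext i
    have h1 := congrFun hp i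
    have h2 := congrFun h i
    simp at h1 h2 ⊢
    linarith
  · exact ⟨_, pos_part_mem hE hx, hp, fun i => by have := le_abs_self (x i); have := neg_abs_le (x i); linarith⟩

end NNB

namespace NNB
variable {n : ℕ}

/-- decomposition against a minimal-support nonnegative vector -/
lemma decompose {E : Submodule ℝ (Fin n → ℝ)}
    (hE : ∀ x ∈ E, (fun i => |x i|) ∈ E)
    {u : Fin n → ℝ} (huE : u ∈ E) (hu0 : u ≠ 0) (hupos : ∀ i, 0 ≤ u i)
    (hmin : ∀ u', u' ∈ E → u' ≠ 0 → (∀ i, 0 ≤ u' i) → (supp u).card ≤ (supp u').card)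
    {v : Fin n → ℝ} (hvE : v ∈ E) (hvpos : ∀ i, 0 ≤ v i) :
    ∃ (t : ℝ) (w : Fin n → ℝ), w ∈ E ∧ (∀ i, 0 ≤ w i) ∧ (∀ i, u i ≠ 0 → w i = 0) ∧ v = t • u + w := by
  have hsupp : (supp u).Nonempty := by
    rw [Finset.nonempty_iff_ne_empty]
    intro h
    apply hu0; funext i
    have : i ∉ supp u := h ▸ Finset.notMem_empty i
    simpa [mem_supp] using this
  obtain ⟨i₀, hi₀, hminratio⟩ := Finset.exists_min_image (supp u) (fun i => v i / u i) hsupp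
  have hui₀ : 0 < u i₀ := lt_of_le_of_ne (hupos i₀) (Ne.symm (mem_supp.1 hi₀))
  set t := v i₀ / u i₀ with ht
  set w := v - t • u with hw
  have hwE : w ∈ E := E.sub_mem hvE (E.smul_mem t huE)
  have hwpos : ∀ i, 0 ≤ w i := by
    intro i
    by_cases hui : u i = 0
    · simp [hw, hui, hvpos i]
    · have hupi : 0 < u i := lt_of_le_of_ne (hupos i) (Ne.symm hui)
      have := hminratio i (mem_supp.2 hui)
      have : t * u i ≤ v i := by
        rw [ht] at this ⊢
        calc (v i₀ / u i₀) * u i ≤ (v i / u i) * u i := by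
              apply mul_le_mul_of_nonneg_right this hupi.le
        _ = v i := div_mul_cancel₀ _ hui
      simp only [hw, Pi.sub_apply, Pi.smul_apply, smul_eq_mul]
      linarith
  have hwi₀ : w i₀ = 0 := by
    simp only [hw, Pi.sub_apply, Pi.smul_apply, smul_eq_mul, ht]
    field_simp
    ring
  -- min of w and u is in E and has strictly smaller support, hence is zero
  have hmmem : (fun i => min (w i) (u i)) ∈ E := by
    have h1 : (fun i => |(w - u) i|) ∈ E := hE _ (E.sub_mem hwE huE)
    have := E.smul_mem (1/2 : ℝ) (E.sub_mem (E.add_mem hwE huE) h1)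
    convert this using 1
    funext i
    simp only [Pi.smul_apply, Pi.sub_apply, Pi.add_apply, smul_eq_mul]
    rw [min_eq_half]; ring
  have hmzero : (fun i => min (w i) (u i)) = 0 := by
    by_contra hne
    have hcard := hmin _ hmmem hne (fun i => le_min (hwpos i) (hupos i))
    have hsub : supp (fun i => min (w i) (u i)) ⊆ (supp u).erase i₀ := by
      intro i hi
      rw [mem_supp] at hi
      rw [Finset.mem_erase, mem_supp]
      refine ⟨?_, ?_⟩
      · rintro rfl
        exact hi (by rw [hwi₀, min_eq_left (hupos i)])
      · intro hui
        exact hi (by rw [min_eq_right (hui.le.trans (hwpos i)), hui])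
    have := Finset.card_le_card hsub
    have hlt : ((supp u).erase i₀).card < (supp u).card :=
      Finset.card_erase_lt_of_mem hi₀
    omega
  refine ⟨t, w, hwE, hwpos, ?_, by simp [hw]⟩
  intro i hui
  have := congrFun hmzero i
  simp only [Pi.zero_apply] at this
  rcases min_eq_iff.1 this with ⟨h1, _⟩ | ⟨h1, _⟩
  · exact h1
  · exact absurd h1 hui

end NNB

namespace NNB
variable {n : ℕ}

lemma exists_list (k : ℕ) :
    ∀ (E : Submodule ℝ (Fin n → ℝ)), Module.finrank ℝ E ≤ k →
    (∀ x ∈ E, (fun i => |x i|) ∈ E) →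
    ∃ l : List (Fin n → ℝ),
      (∀ v ∈ l, v ∈ E) ∧ (∀ v ∈ l, ∀ i, 0 ≤ v i) ∧
      (∀ v ∈ l, v ⬝ᵥ v = 1) ∧ l.Pairwise (fun v w => v ⬝ᵥ w = 0) ∧
      E ≤ Submodule.span ℝ {v | v ∈ l} := by
  induction k with
  | zero =>
      intro E hrank hE
      refine ⟨[], by simp, by simp, by simp, by simp, ?_⟩
      have : E = ⊥ := Submodule.finrank_eq_zero.mp (Nat.le_zero.mp hrank)
      rw [this]
      exact bot_le
  | succ k ih =>
      intro E hrank hE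
      by_cases hbot : E = ⊥
      · refine ⟨[], by simp, by simp, by simp, by simp, ?_⟩
        rw [hbot]; exact bot_le
      -- pick a nonzero nonnegative vector of minimal support
      obtain ⟨u₀, hu₀E, hu₀0, hu₀pos⟩ := exists_nonneg_ne_zero hE hbot
      have hex : ∃ m : ℕ, ∃ u, u ∈ E ∧ u ≠ 0 ∧ (∀ i, 0 ≤ u i) ∧ (supp u).card = m :=
        ⟨_, u₀, hu₀E, hu₀0, hu₀pos, rfl⟩
      classical
      obtain ⟨u, huE, hu0, hupos, hucard⟩ := Nat.find_spec hex
      have hmin : ∀ u', u' ∈ E → u' ≠ 0 → (∀ i, 0 ≤ u' i) →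
          (supp u).card ≤ (supp u').card := by
        intro u' h1 h2 h3
        rw [hucard]
        exact Nat.find_le ⟨u', h1, h2, h3, rfl⟩
      -- the subspace of vectors vanishing on supp u
      set K : Submodule ℝ (Fin n → ℝ) :=
        ⨅ i ∈ supp u, LinearMap.ker (LinearMap.proj (R := ℝ) (φ := fun _ : Fin n => ℝ) i) with hK
      have hmemK : ∀ x : Fin n → ℝ, x ∈ K ↔ ∀ i, u i ≠ 0 → x i = 0 := by
        intro x
        simp [hK, Submodule.mem_iInf, LinearMap.mem_ker, mem_supp, LinearMap.proj]
      set E' := E ⊓ K with hE'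
      have hE'abs : ∀ x ∈ E', (fun i => |x i|) ∈ E' := by
        intro x hx
        rcases Submodule.mem_inf.1 hx with ⟨hx1, hx2⟩
        refine Submodule.mem_inf.2 ⟨hE x hx1, (hmemK _).2 fun i hi => ?_⟩
        rw [abs_eq_zero]
        exact (hmemK x).1 hx2 i hi
      have huK : u ∉ E' := by
        intro h
        rcases Submodule.mem_inf.1 h with ⟨-, h2⟩
        apply hu0
        funext i
        by_cases hui : u i = 0
        · exact hui
        · exact (hmemK u).1 h2 i hui
      have hlt : E' < E := lt_of_le_of_ne inf_le_left (fun h => huK (h ▸ huE))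
      have hrank' : Module.finrank ℝ E' ≤ k := by
        have := Submodule.finrank_lt_finrank_of_lt hlt
        omega
      obtain ⟨l', hl'E, hl'pos, hl'norm, hl'pair, hl'span⟩ := ih E' hrank' hE'abs
      -- normalize u
      have hudot : 0 < u ⬝ᵥ u := by
        rcases lt_or_eq_of_le (Finset.sum_nonneg fun i _ => mul_self_nonneg (u i)) with h | h
        · exact h
        · exact absurd (dotProduct_self_eq_zero.mp h.symm) hu0
      set c : ℝ := (Real.sqrt (u ⬝ᵥ u))⁻¹ with hc
      have hcpos : 0 < c := inv_pos.2 (Real.sqrt_pos.2 hudot)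
      set u1 := c • u with hu1
      have hu1dot : u1 ⬝ᵥ u1 = 1 := by
        rw [hu1, smul_dotProduct, dotProduct_smul, smul_eq_mul, smul_eq_mul, ← mul_assoc, hc]
        rw [← Real.sqrt_mul_self hudot.le]
        field_simp
        rw [Real.sq_sqrt (Real.sqrt_nonneg _)]
      refine ⟨u1 :: l', ?_, ?_, ?_, ?_, ?_⟩
      · intro v hv''
        rcases List.mem_cons.1 hv'' with rfl | hv
        · exact E.smul_mem c huE
        · exact (inf_le_left : E ⊓ K ≤ E) (hl'E v hv)
      · intro v hv''
        rcases List.mem_cons.1 hv'' with rfl | hv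
        · intro i
          simp only [hu1, Pi.smul_apply, smul_eq_mul]
          exact mul_nonneg hcpos.le (hupos i)
        · exact hl'pos v hv
      · intro v hv''
        rcases List.mem_cons.1 hv'' with rfl | hv
        · exact hu1dot
        · exact hl'norm v hv
      · refine List.Pairwise.cons ?_ hl'pair
        intro v hv
        have hvK := (Submodule.mem_inf.1 (hl'E v hv)).2
        rw [hu1, smul_dotProduct, smul_eq_mul]
        have : u ⬝ᵥ v = 0 := by
          apply Finset.sum_eq_zero
          intro i _
          by_cases hui : u i = 0
          · simp [hui]
          · simp [(hmemK v).1 hvK i hui]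
        rw [this, mul_zero]
      · intro x hx
        have hspan : {v : Fin n → ℝ | v ∈ l'} ⊆ {v : Fin n → ℝ | v ∈ u1 :: l'} := by
          intro v hv; exact List.mem_cons_of_mem _ hv
        have hl'span' : (E' : Set (Fin n → ℝ)) ⊆
            (Submodule.span ℝ {v : Fin n → ℝ | v ∈ u1 :: l'} : Set _) :=
          fun z hz => Submodule.span_mono hspan (hl'span hz)
        have hu1span : u ∈ Submodule.span ℝ {v : Fin n → ℝ | v ∈ u1 :: l'} := by
          have h1 : u1 ∈ Submodule.span ℝ {v : Fin n → ℝ | v ∈ u1 :: l'} :=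
            Submodule.subset_span List.mem_cons_self
          have := Submodule.smul_mem _ c⁻¹ h1
          rwa [hu1, smul_smul, inv_mul_cancel₀ hcpos.ne', one_smul] at this
        obtain ⟨t₁, w₁, hw₁E, hw₁pos, hw₁K, hdec₁⟩ :=
          decompose hE huE hu0 hupos hmin (pos_part_mem hE hx)
            (fun i => by have := le_abs_self (x i); have := neg_abs_le (x i); linarith)
        obtain ⟨t₂, w₂, hw₂E, hw₂pos, hw₂K, hdec₂⟩ :=
          decompose hE huE hu0 hupos hmin (neg_part_mem hE hx)
            (fun i => by have := le_abs_self (x i); have := neg_abs_le (x i); linarith)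
        have hw₁E' : w₁ ∈ E' := Submodule.mem_inf.2 ⟨hw₁E, (hmemK w₁).2 hw₁K⟩
        have hw₂E' : w₂ ∈ E' := Submodule.mem_inf.2 ⟨hw₂E, (hmemK w₂).2 hw₂K⟩
        have hx_eq : x = (t₁ - t₂) • u + (w₁ - w₂) := by
          funext i
          have h1 := congrFun hdec₁ i
          have h2 := congrFun hdec₂ i
          simp only [Pi.add_apply, Pi.smul_apply, Pi.sub_apply, smul_eq_mul] at h1 h2 ⊢
          linarith
        rw [hx_eq]
        apply Submodule.add_mem
        · exact Submodule.smul_mem _ _ hu1span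
        · exact Submodule.sub_mem _ (hl'span' hw₁E') (hl'span' hw₂E')

lemma key (P : Matrix (Fin n) (Fin n) ℝ) (hP : P.IsHermitian) (lam : ℝ)
    (hle : ∀ i, hP.eigenvalues i ≤ lam) (x : Fin n → ℝ) :
    x ⬝ᵥ (P *ᵥ x) ≤ lam * (x ⬝ᵥ x) ∧
    (x ⬝ᵥ (P *ᵥ x) = lam * (x ⬝ᵥ x) → P *ᵥ x = lam • x) := by
  classical
  set U : Matrix (Fin n) (Fin n) ℝ := ↑hP.eigenvectorUnitary with hU
  have hUU : U * star U = 1 := mem_unitaryGroup_iff.mp hP.eigenvectorUnitary.2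
  set y := star U *ᵥ x with hy
  have hUy : U *ᵥ y = x := by rw [hy, mulVec_mulVec, hUU, one_mulVec]
  have hPx : P *ᵥ x = U *ᵥ (diagonal hP.eigenvalues *ᵥ y) := by
    conv_lhs => rw [hP.spectral_theorem]
    simp only [RCLike.ofReal_real_eq_id, Function.id_comp, Unitary.conjStarAlgAut_apply]
    rw [hy, mulVec_mulVec, mulVec_mulVec, Matrix.mul_assoc]
  have hyx : y = Uᵀ *ᵥ x := by
    rw [hy, Matrix.star_eq_conjTranspose, conjTranspose_eq_transpose_of_trivial]
  have hpair : ∀ z, x ⬝ᵥ (U *ᵥ z) = y ⬝ᵥ z := by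
    intro z
    rw [dotProduct_mulVec, hyx, mulVec_transpose]
  have h1 : x ⬝ᵥ (P *ᵥ x) = ∑ i, hP.eigenvalues i * (y i * y i) := by
    rw [hPx, hpair]
    simp only [dotProduct, mulVec_diagonal]
    exact Finset.sum_congr rfl fun i _ => by ring
  have h2 : x ⬝ᵥ x = y ⬝ᵥ y := by
    calc x ⬝ᵥ x = x ⬝ᵥ (U *ᵥ y) := by rw [hUy]
    _ = y ⬝ᵥ y := hpair y
  have h3 : lam * (x ⬝ᵥ x) = ∑ i, lam * (y i * y i) := by
    rw [h2]; simp only [dotProduct]; rw [Finset.mul_sum]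
  constructor
  · rw [h1, h3]
    exact Finset.sum_le_sum fun i _ =>
      mul_le_mul_of_nonneg_right (hle i) (mul_self_nonneg _)
  · intro heq
    have hsum0 : ∑ i, (lam - hP.eigenvalues i) * (y i * y i) = 0 := by
      have : ∑ i, ((lam * (y i * y i)) - hP.eigenvalues i * (y i * y i)) = 0 := by
        rw [Finset.sum_sub_distrib, ← h1, ← h3, heq, sub_self]
      rw [← this]
      exact Finset.sum_congr rfl fun i _ => by ring
    have hterm : ∀ i ∈ Finset.univ, (lam - hP.eigenvalues i) * (y i * y i) = 0 :=
      (Finset.sum_eq_zero_iff_of_nonneg fun i _ =>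
        mul_nonneg (sub_nonneg.2 (hle i)) (mul_self_nonneg _)).1 hsum0
    have hDy : diagonal hP.eigenvalues *ᵥ y = lam • y := by
      funext i
      rw [mulVec_diagonal]
      rcases mul_eq_zero.1 (hterm i (Finset.mem_univ i)) with h | h
      · have : hP.eigenvalues i = lam := by linarith [sub_eq_zero.1 h]
        rw [this]; rfl
      · have h0 : y i = 0 := mul_self_eq_zero.1 h
        simp [h0, Pi.smul_apply]
    rw [hPx, hDy, mulVec_smul, hUy]

lemma abs_eigen (P : Matrix (Fin n) (Fin n) ℝ) (hP : P.IsHermitian) (lam : ℝ)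
    (hle : ∀ i, hP.eigenvalues i ≤ lam) (hpos : ∀ i j, 0 ≤ P i j)
    (x : Fin n → ℝ) (hx : P *ᵥ x = lam • x) :
    P *ᵥ (fun i => |x i|) = lam • (fun i => |x i|) := by
  set a : Fin n → ℝ := fun i => |x i| with ha
  have haa : a ⬝ᵥ a = x ⬝ᵥ x := by
    simp only [dotProduct, ha]
    exact Finset.sum_congr rfl fun i _ => abs_mul_abs_self _
  have hxPx : x ⬝ᵥ (P *ᵥ x) = lam * (x ⬝ᵥ x) := by
    rw [hx, dotProduct_smul, smul_eq_mul]
  have hmono : x ⬝ᵥ (P *ᵥ x) ≤ a ⬝ᵥ (P *ᵥ a) := by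
    simp only [dotProduct, mulVec, ha]
    apply Finset.sum_le_sum
    intro i _
    rw [Finset.mul_sum, Finset.mul_sum]
    apply Finset.sum_le_sum
    intro j _
    have h1 : x i * x j ≤ |x i| * |x j| := by
      rw [← abs_mul]; exact le_abs_self _
    calc x i * (P i j * x j) = P i j * (x i * x j) := by ring
    _ ≤ P i j * (|x i| * |x j|) := mul_le_mul_of_nonneg_left h1 (hpos i j)
    _ = |x i| * (P i j * |x j|) := by ring
  have hupper := (key P hP lam hle a).1
  have heq : a ⬝ᵥ (P *ᵥ a) = lam * (a ⬝ᵥ a) := by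
    rw [haa]
    refine le_antisymm (haa ▸ hupper) ?_
    rw [← hxPx]; exact hmono
  exact (key P hP lam hle a).2 heq

end NNB

open scoped Matrix

/-- A symmetric real matrix with nonnegative entries admits an orthonormal
basis of its top eigenspace (for the largest eigenvalue `λ₁ = ⨆ i, eigenvalues i`) consisting
of vectors with nonnegative components. -/
theorem top_eigenspace_has_nonneg_orthonormal_basis
    {n : ℕ} (hn : 0 < n) (P : Matrix (Fin n) (Fin n) ℝ)
    (hP : P.IsHermitian) (hpos : ∀ i j, 0 ≤ P i j) :
    ∃ (d : ℕ) (b : Fin d → (Fin n → ℝ)),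
      (∀ i j, b i ⬝ᵥ b j = if i = j then 1 else 0) ∧
      (∀ j v, 0 ≤ b j v) ∧
      (∀ j, P.mulVec (b j) = (⨆ i, hP.eigenvalues i) • b j) ∧
      (∀ x : Fin n → ℝ, P.mulVec x = (⨆ i, hP.eigenvalues i) • x →
        x ∈ Submodule.span ℝ (Set.range b)) := by
  classical
  have hne : Nonempty (Fin n) := ⟨⟨0, hn⟩⟩
  set lam := ⨆ i, hP.eigenvalues i with hlam
  have hle : ∀ i, hP.eigenvalues i ≤ lam := fun i =>
    le_ciSup (Set.Finite.bddAbove (Set.finite_range _)) i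
  set E : Submodule ℝ (Fin n → ℝ) :=
    LinearMap.ker (P.mulVecLin - lam • LinearMap.id) with hEdef
  have hmemE : ∀ x, x ∈ E ↔ P *ᵥ x = lam • x := by
    intro x
    simp only [hEdef, LinearMap.mem_ker, LinearMap.sub_apply, Matrix.mulVecLin_apply,
      LinearMap.smul_apply, LinearMap.id_apply, sub_eq_zero]
  have habs : ∀ x ∈ E, (fun i => |x i|) ∈ E := fun x hx =>
    (hmemE _).2 (NNB.abs_eigen P hP lam hle hpos x ((hmemE x).1 hx))
  obtain ⟨l, hlE, hlpos, hlnorm, hlpair, hlspan⟩ :=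
    NNB.exists_list (Module.finrank ℝ E) E le_rfl habs
  have hrange : Set.range (fun j => l.get j) = {v | v ∈ l} := by
    ext v
    simp [List.mem_iff_get]
  refine ⟨l.length, fun j => l.get j, ?_, ?_, ?_, ?_⟩
  · intro i j
    rcases lt_trichotomy i j with h | h | h
    · rw [if_neg (Fin.ne_of_lt h)]
      exact List.pairwise_iff_get.1 hlpair i j h
    · rw [if_pos h, h]
      exact hlnorm _ (l.get_mem _)
    · rw [if_neg (Fin.ne_of_gt h), dotProduct_comm]
      exact List.pairwise_iff_get.1 hlpair j i h
  · intro j v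
    exact hlpos _ (l.get_mem _) v
  · intro j
    exact (hmemE _).1 (hlE _ (l.get_mem _))
  · intro x hx
    rw [hrange]
    exact hlspan ((hmemE x).2 hx)
end

section
/- Let z ∈ ℝ^V be a centered Gaussian vector with covariance K, let P be a symmetric matrix with nonnegative entries, let Π₁ be the orthogonal projection onto the top eigenspace of P, and set K' = c · P·E[σ(z)σ(z)ᵀ]·P with c > 0 and σ = ReLU. Then tr(K'·Π₁) ≥ (c/2)·λ₁(P)²·tr(K·Π₁). -/
open MeasureTheory ProbabilityTheory
open scoped NNReal Matrix
open Filter Real Matrix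
open scoped ENNReal

/-- derivative of x ↦ x * |x| -/
lemma hasDerivAt_mul_abs (x : ℝ) : HasDerivAt (fun y : ℝ => y * |y|) (2 * |x|) x := by
  rcases lt_trichotomy x 0 with hx | hx | hx
  · have h : HasDerivAt (fun y : ℝ => -(y * y)) (2 * |x|) x := by
      have := ((hasDerivAt_id x).mul (hasDerivAt_id x)).neg
      refine this.congr_deriv ?_
      rw [abs_of_neg hx]; simp only [id]; ring
    apply h.congr_of_eventuallyEq
    filter_upwards [Iio_mem_nhds hx] with y hy
    rw [abs_of_neg hy]; ring
  · subst hx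
    rw [hasDerivAt_iff_tendsto_slope]
    have h1 : ∀ y : ℝ, y ≠ 0 → slope (fun y : ℝ => y * |y|) 0 y = |y| := by
      intro y hy
      rw [slope_def_field]
      field_simp [mul_comm]
      ring
    have h2 : Filter.Tendsto (fun y : ℝ => |y|) (nhdsWithin 0 {(0:ℝ)}ᶜ) (nhds (2 * |(0:ℝ)|)) := by
      simp only [abs_zero, mul_zero]
      have := (continuous_abs.tendsto 0).mono_left (nhdsWithin_le_nhds (s := {(0:ℝ)}ᶜ))
      simpa using this
    refine h2.congr' ?_
    filter_upwards [self_mem_nhdsWithin] with y hy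
    exact (h1 y hy).symm
  · have h : HasDerivAt (fun y : ℝ => y * y) (2 * |x|) x := by
      have := (hasDerivAt_id x).mul (hasDerivAt_id x)
      refine this.congr_deriv ?_
      rw [abs_of_pos hx]; simp only [id]; ring
    apply h.congr_of_eventuallyEq
    filter_upwards [Ioi_mem_nhds hx] with y hy
    rw [abs_of_pos hy]

lemma integrable_sq_exp {b : ℝ} (hb : 0 < b) :
    Integrable (fun x : ℝ => x ^ 2 * Real.exp (-b * x ^ 2)) := by
  have hb2 : 0 < b / 2 := by linarith
  refine (integrable_exp_neg_mul_sq hb2).const_mul (2 / b) |>.mono'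
    ((continuous_pow 2).mul (continuous_exp.comp (by continuity))).aestronglyMeasurable
    (ae_of_all _ fun x => ?_)
  have h1 : (b/2) * x ^ 2 ≤ Real.exp ((b/2) * x ^ 2) := by
    have := Real.add_one_le_exp ((b/2) * x ^ 2)
    linarith
  have h2 : x ^ 2 * Real.exp (-b * x ^ 2) ≤ 2 / b * Real.exp (-(b/2) * x ^ 2) := by
    have hx : x ^ 2 ≤ 2 / b * Real.exp ((b/2) * x ^ 2) := by
      have h3 := mul_le_mul_of_nonneg_left h1 (by positivity : (0:ℝ) ≤ 2/b)
      calc x ^ 2 = 2/b * (b/2 * x ^ 2) := by field_simp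
        _ ≤ 2/b * Real.exp (b/2 * x ^ 2) := h3
    have hepos : (0:ℝ) < Real.exp (-b * x ^ 2) := Real.exp_pos _
    calc x ^ 2 * Real.exp (-b * x ^ 2) ≤ (2 / b * Real.exp ((b/2) * x ^ 2)) * Real.exp (-b * x ^ 2) := by
          exact mul_le_mul_of_nonneg_right hx hepos.le
      _ = 2 / b * Real.exp (-(b/2) * x ^ 2) := by
          rw [mul_assoc, ← Real.exp_add]; ring_nf
  have h3 : ‖x ^ 2 * Real.exp (-b * x ^ 2)‖ = x ^ 2 * Real.exp (-b * x ^ 2) := by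
    rw [Real.norm_eq_abs, abs_of_nonneg (by positivity)]
  rw [h3]; exact h2

lemma integral_sq_exp {b : ℝ} (hb : 0 < b) :
    ∫ x : ℝ, x ^ 2 * Real.exp (-b * x ^ 2) = (2 * b)⁻¹ * Real.sqrt (π / b) := by
  have hu : ∀ x : ℝ, HasDerivAt (fun y : ℝ => y) (1:ℝ) x := fun x => hasDerivAt_id x
  have hv : ∀ x : ℝ, HasDerivAt (fun y : ℝ => -(2*b)⁻¹ * Real.exp (-b * y ^ 2))
      (x * Real.exp (-b * x ^ 2)) x := by
    intro x
    have h1 : HasDerivAt (fun y : ℝ => -b * y ^ 2) (-b * (2 * x)) x := by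
      simpa using ((hasDerivAt_pow 2 x).const_mul (-b))
    have h2 := (h1.exp).const_mul (-(2*b)⁻¹)
    refine h2.congr_deriv ?_
    field_simp
  have huv' : Integrable ((fun y : ℝ => y) * fun x => x * Real.exp (-b * x ^ 2)) := by
    have := integrable_sq_exp hb
    refine this.congr (ae_of_all _ fun x => ?_)
    simp [Pi.mul_apply]; ring
  have hu'v : Integrable ((fun _ : ℝ => (1:ℝ)) * fun y => -(2*b)⁻¹ * Real.exp (-b * y ^ 2)) := by
    refine ((integrable_exp_neg_mul_sq hb).const_mul (-(2*b)⁻¹)).congr (ae_of_all _ fun x => ?_)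
    simp [Pi.mul_apply]
  have huv : Integrable ((fun y : ℝ => y) * fun y => -(2*b)⁻¹ * Real.exp (-b * y ^ 2)) := by
    refine ((integrable_mul_exp_neg_mul_sq hb).const_mul (-(2*b)⁻¹)).congr (ae_of_all _ fun x => ?_)
    simp [Pi.mul_apply]; ring
  have key := integral_mul_deriv_eq_deriv_mul_of_integrable (fun x _ => hu x) (fun x _ => hv x) huv' hu'v huv
  have h2 : ∫ x : ℝ, x ^ 2 * Real.exp (-b * x ^ 2) = ∫ x : ℝ, x * (x * Real.exp (-b * x ^ 2)) := by
    congr 1; funext x; ring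
  rw [h2, key]
  have : ∫ x : ℝ, (1:ℝ) * (-(2*b)⁻¹ * Real.exp (-b * x ^ 2)) = -(2*b)⁻¹ * √(π / b) := by
    simp_rw [one_mul]
    rw [integral_const_mul, integral_gaussian]
  rw [this]; ring

open scoped NNReal ENNReal

lemma integral_comp_neg_real (f : ℝ → ℝ) : ∫ x : ℝ, f (-x) = ∫ x : ℝ, f x := by
  have A : MeasurableEmbedding (fun x : ℝ => -x) := (Homeomorph.neg ℝ).measurableEmbedding
  rw [← A.integral_map, Measure.map_neg_eq_self (volume : Measure ℝ)]

lemma gaussianReal_withDensity (v : ℝ≥0) (hv : v ≠ 0) :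
    gaussianReal 0 v
      = volume.withDensity (fun x => ((gaussianPDFReal 0 v x).toNNReal : ℝ≥0∞)) := by
  rw [gaussianReal_of_var_ne_zero 0 hv]
  rfl

lemma pdf_meas (v : ℝ≥0) : Measurable (fun x => (gaussianPDFReal 0 v x).toNNReal) :=
  (measurable_gaussianPDFReal 0 v).real_toNNReal

lemma integral_gaussianReal_eq (v : ℝ≥0) (hv : v ≠ 0) (g : ℝ → ℝ) :
    ∫ x, g x ∂(gaussianReal 0 v) = ∫ x : ℝ, gaussianPDFReal 0 v x * g x := by
  rw [gaussianReal_withDensity v hv, integral_withDensity_eq_integral_smul (pdf_meas v) g]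
  congr 1; funext x
  rw [NNReal.smul_def, smul_eq_mul, Real.coe_toNNReal _ (gaussianPDFReal_nonneg 0 v x)]

lemma integrable_gaussianReal_iff (v : ℝ≥0) (hv : v ≠ 0) (g : ℝ → ℝ) :
    Integrable g (gaussianReal 0 v) ↔
      Integrable (fun x : ℝ => gaussianPDFReal 0 v x * g x) := by
  rw [gaussianReal_withDensity v hv,
    integrable_withDensity_iff_integrable_smul (pdf_meas v)]
  constructor <;> intro h <;> refine h.congr (ae_of_all _ fun x => ?_) <;>
    simp only [NNReal.smul_def, smul_eq_mul, Real.coe_toNNReal _ (gaussianPDFReal_nonneg 0 v x)]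

lemma gaussianReal_sq_integrable (v : ℝ≥0) :
    Integrable (fun x : ℝ => x ^ 2) (gaussianReal 0 v) := by
  by_cases hv : v = 0
  · subst hv
    rw [gaussianReal_zero_var]
    exact (integrable_const ((0:ℝ)^2)).congr (ae_eq_dirac (fun x : ℝ => x^2)).symm
  · rw [integrable_gaussianReal_iff v hv]
    have hv' : (0:ℝ) < v := by positivity
    have hb : (0:ℝ) < (2*(v:ℝ))⁻¹ := by positivity
    refine ((integrable_sq_exp hb).const_mul ((√(2 * π * v))⁻¹)).congr (ae_of_all _ fun x => ?_)
    simp only [gaussianPDFReal_def]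
    have : -(x - 0) ^ 2 / (2 * (v:ℝ)) = -(2*(v:ℝ))⁻¹ * x ^ 2 := by field_simp; ring
    rw [this]; ring

lemma gaussianReal_sq_integral (v : ℝ≥0) :
    ∫ x, x ^ 2 ∂(gaussianReal 0 v) = v := by
  by_cases hv : v = 0
  · subst hv; rw [gaussianReal_zero_var, integral_dirac]; norm_num
  · rw [integral_gaussianReal_eq v hv]
    have hv' : (0:ℝ) < v := by positivity
    have hb : (0:ℝ) < (2*(v:ℝ))⁻¹ := by positivity
    have h1 : ∀ x : ℝ, gaussianPDFReal 0 v x * x ^ 2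
        = (√(2 * π * v))⁻¹ * (x ^ 2 * Real.exp (-(2*(v:ℝ))⁻¹ * x ^ 2)) := by
      intro x
      simp only [gaussianPDFReal_def]
      have : -(x - 0) ^ 2 / (2 * (v:ℝ)) = -(2*(v:ℝ))⁻¹ * x ^ 2 := by field_simp; ring
      rw [this]; ring
    simp_rw [h1]
    rw [integral_const_mul, integral_sq_exp hb]
    have h2 : π / (2*(v:ℝ))⁻¹ = 2 * π * v := by field_simp
    have h3 : (2 * (2*(v:ℝ))⁻¹)⁻¹ = v := by field_simp
    rw [h2, h3]
    have h4 : (0:ℝ) < √(2 * π * v) := Real.sqrt_pos.mpr (by positivity)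
    field_simp

lemma gaussianReal_odd_integral (v : ℝ≥0) :
    ∫ x, x * |x| ∂(gaussianReal 0 v) = 0 := by
  by_cases hv : v = 0
  · rw [hv, gaussianReal_zero_var, integral_dirac]; simp
  · rw [integral_gaussianReal_eq v hv]
    set g : ℝ → ℝ := fun x => gaussianPDFReal 0 v x * (x * |x|) with hg
    have key : ∀ x : ℝ, g (-x) = -g x := by
      intro x
      simp only [hg, gaussianPDFReal_def]
      rw [abs_neg]
      have : (-x - 0 : ℝ) ^ 2 = (x - 0) ^ 2 := by ring
      rw [this]; ring
    have h1 : ∫ x : ℝ, g (-x) = ∫ x : ℝ, g x := integral_comp_neg_real g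
    simp_rw [key] at h1
    rw [integral_neg] at h1
    linarith


lemma matrix_ext_mulVec {V : Type*} [Fintype V] [DecidableEq V]
    {A B : Matrix V V ℝ} (h : ∀ x, A.mulVec x = B.mulVec x) : A = B := by
  ext i j
  have := congrFun (h (Pi.single j 1)) i
  simpa [Matrix.mulVec_single] using this

lemma proj_entries_nonneg {V : Type*} [Fintype V] [DecidableEq V] [Nonempty V]
    (P : Matrix V V ℝ) (hP : P.IsHermitian) (hpos : ∀ v₁ v₂, 0 ≤ P v₁ v₂)
    (Q : Matrix V V ℝ) (hQsym : Q.IsHermitian)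
    (hQrange : ∀ x : V → ℝ, P.mulVec (Q.mulVec x) = (⨆ i, hP.eigenvalues i) • Q.mulVec x)
    (hQfix : ∀ x : V → ℝ, P.mulVec x = (⨆ i, hP.eigenvalues i) • x → Q.mulVec x = x) :
    ∀ i j, 0 ≤ Q i j := by
  classical
  set μ : V → ℝ := hP.eigenvalues with hμ
  set lam : ℝ := ⨆ i, μ i with hlam
  set U : Matrix V V ℝ := (hP.eigenvectorUnitary : Matrix V V ℝ) with hUdef
  have hU : U * star U = 1 := Matrix.mem_unitaryGroup_iff.mp (hP.eigenvectorUnitary).2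
  have hU' : star U * U = 1 := Matrix.mem_unitaryGroup_iff'.mp (hP.eigenvectorUnitary).2
  have hspec : P = U * Matrix.diagonal μ * star U := by
    have h := hP.spectral_theorem
    simpa using h
  -- conjugation by U
  set conj : (V → ℝ) → Matrix V V ℝ := fun d => U * Matrix.diagonal d * star U with hconj
  have conj_apply : ∀ d i j, conj d i j = ∑ m, U i m * d m * U j m := by
    intro d i j
    simp only [hconj, Matrix.mul_apply, Matrix.diagonal_apply, mul_ite, mul_zero, ite_mul,
      zero_mul, Finset.sum_ite_eq, Finset.sum_ite_eq', Finset.mem_univ, if_true,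
      Matrix.star_apply, star_trivial]
  have conj_mul : ∀ d₁ d₂, conj d₁ * conj d₂ = conj (fun m => d₁ m * d₂ m) := by
    intro d₁ d₂
    simp only [hconj, Matrix.mul_assoc]
    rw [← Matrix.mul_assoc (star U) U, hU', Matrix.one_mul,
      ← Matrix.mul_assoc (Matrix.diagonal d₁) (Matrix.diagonal d₂),
      Matrix.diagonal_mul_diagonal]
  have conj_one : conj (fun _ => (1:ℝ)) = 1 := by
    simp only [hconj]
    rw [show (Matrix.diagonal (fun _ : V => (1:ℝ))) = 1 from Matrix.diagonal_one,
      Matrix.mul_one, hU]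
  -- scalar setup
  set s : ℝ := 1 + ∑ m, |μ m| with hs
  have hs0 : (0:ℝ) ≤ s := by positivity
  have hμs : ∀ m, 1 ≤ μ m + s := by
    intro m
    have h1 : |μ m| ≤ ∑ m', |μ m'| :=
      Finset.single_le_sum (f := fun m' => |μ m'|) (fun _ _ => abs_nonneg _) (Finset.mem_univ m)
    have h2 := neg_abs_le (μ m)
    simp only [hs]; linarith
  have hle : ∀ m, μ m ≤ lam :=
    fun m => le_ciSup (Set.Finite.bddAbove (Set.finite_range μ)) m
  have hlams : (0:ℝ) < lam + s := by
    obtain ⟨m₀⟩ := (inferInstance : Nonempty V)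
    have := hμs m₀; have := hle m₀; linarith
  set ratio : V → ℝ := fun m => (μ m + s) / (lam + s) with hratio
  have hr0 : ∀ m, 0 ≤ ratio m := fun m => div_nonneg (by linarith [hμs m]) hlams.le
  have hr1 : ∀ m, μ m < lam → ratio m < 1 := by
    intro m hm
    rw [hratio, div_lt_one hlams]
    linarith
  have hreq : ∀ m, μ m = lam → ratio m = 1 := by
    intro m hm
    rw [hratio]
    field_simp [hm]
    linarith
  -- the matrix A
  set A : Matrix V V ℝ := conj ratio with hA
  have hAentries : ∀ i j, 0 ≤ A i j := by
    intro i j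
    have h1 : A i j = (lam + s)⁻¹ * (P i j + s * (1 : Matrix V V ℝ) i j) := by
      have hcjμ : conj μ = P := by rw [hconj]; exact hspec.symm
      have hP' : P i j = conj μ i j := by rw [hcjμ]
      have h1' : (1 : Matrix V V ℝ) i j = conj (fun _ => (1:ℝ)) i j := by rw [conj_one]
      rw [hP', h1', hA, conj_apply, conj_apply, conj_apply]
      simp only [mul_add, Finset.mul_sum, ← Finset.sum_add_distrib]
      refine Finset.sum_congr rfl fun m _ => ?_
      rw [hratio]
      field_simp
      try ring
    rw [h1]
    have h2 : (0:ℝ) ≤ (1 : Matrix V V ℝ) i j := by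
      rw [Matrix.one_apply]; split <;> norm_num
    have := hpos i j
    positivity
  -- powers
  set N : ℕ → Matrix V V ℝ := fun k => conj (fun m => ratio m ^ k) with hN
  have hN0 : N 0 = 1 := by
    simp only [hN, pow_zero]; exact conj_one
  have hNsucc : ∀ k, N (k+1) = N k * A := by
    intro k
    rw [hN, hA, conj_mul]
    simp only [← pow_succ]
  have hNnonneg : ∀ k i j, 0 ≤ N k i j := by
    intro k
    induction k with
    | zero =>
      intro i j; rw [hN0, Matrix.one_apply]; split <;> norm_num
    | succ k ih =>
      intro i j
      rw [hNsucc, Matrix.mul_apply]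
      exact Finset.sum_nonneg fun m _ => mul_nonneg (ih i m) (hAentries m j)
  -- limit projection
  set ind : V → ℝ := fun m => if μ m = lam then 1 else 0 with hind
  set Q₀ : Matrix V V ℝ := conj ind with hQ₀
  have hlim : ∀ i j, Tendsto (fun k => N k i j) atTop (nhds (Q₀ i j)) := by
    intro i j
    have h1 : ∀ k, N k i j = ∑ m, U i m * ratio m ^ k * U j m := fun k => conj_apply _ i j
    have h2 : Q₀ i j = ∑ m, U i m * ind m * U j m := conj_apply _ i j
    simp_rw [h1, h2]
    refine tendsto_finset_sum _ fun m _ => ?_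
    by_cases h : μ m = lam
    · have : ratio m = 1 := hreq m h
      simp only [this, one_pow, hind, if_pos h]
      exact tendsto_const_nhds
    · have hlt : ratio m < 1 := hr1 m (lt_of_le_of_ne (hle m) h)
      have := ((tendsto_pow_atTop_nhds_zero_of_lt_one (hr0 m) hlt).const_mul
        (U i m)).mul_const (U j m)
      simp only [mul_zero, zero_mul] at this
      simpa [hind, if_neg h] using this
  have hQ₀nonneg : ∀ i j, 0 ≤ Q₀ i j := fun i j =>
    ge_of_tendsto' (hlim i j) (fun k => hNnonneg k i j)
  -- P * Q₀ = lam • Q₀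
  have hcjμ : conj μ = P := by rw [hconj]; exact hspec.symm
  have hPQ₀ : P * Q₀ = lam • Q₀ := by
    have h1 : P * Q₀ = conj (fun m => μ m * ind m) := by
      rw [hQ₀, ← hcjμ, conj_mul]
    rw [h1]
    ext i j
    rw [conj_apply, Matrix.smul_apply, hQ₀, conj_apply, Finset.smul_sum]
    refine Finset.sum_congr rfl fun m _ => ?_
    by_cases h : μ m = lam
    · simp only [hind, if_pos h, h, smul_eq_mul]; ring
    · simp [hind, if_neg h]
  -- Q * Q₀ = Q₀
  have hQQ₀ : Q * Q₀ = Q₀ := by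
    apply matrix_ext_mulVec
    intro x
    rw [← Matrix.mulVec_mulVec]
    apply hQfix
    rw [Matrix.mulVec_mulVec, hPQ₀, Matrix.smul_mulVec]
  -- Q₀ fixes eigenvectors
  have hQ₀fix : ∀ y : V → ℝ, P.mulVec y = lam • y → Q₀.mulVec y = y := by
    intro y hy
    set w : V → ℝ := (star U).mulVec y with hw
    have hUw : U.mulVec w = y := by
      rw [hw, Matrix.mulVec_mulVec, hU, Matrix.one_mulVec]
    have hDw : ∀ m, μ m * w m = lam * w m := by
      have h1 : (Matrix.diagonal μ).mulVec w = lam • w := by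
        have h2 : (star U).mulVec (P.mulVec y) = (star U).mulVec (lam • y) := by rw [hy]
        rw [Matrix.mulVec_smul] at h2
        rw [Matrix.mulVec_mulVec, hspec] at h2
        rw [← Matrix.mul_assoc, ← Matrix.mul_assoc, hU', Matrix.one_mul] at h2
        rw [← Matrix.mulVec_mulVec] at h2
        rw [hw]
        exact h2
      intro m
      have := congrFun h1 m
      rw [Matrix.mulVec_diagonal] at this
      simpa using this
    have hiw : Matrix.diagonal ind *ᵥ w = w := by
      funext m
      rw [Matrix.mulVec_diagonal]
      by_cases h : μ m = lam
      · simp [hind, h]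
      · have h0 : w m = 0 := by
          have := hDw m
          have h2 : (μ m - lam) * w m = 0 := by ring_nf; linarith [this]
          rcases mul_eq_zero.mp h2 with h3 | h3
          · exact absurd (by linarith : μ m = lam) h
          · exact h3
        simp [hind, h, h0]
    rw [hQ₀, hconj]
    show (U * Matrix.diagonal ind * star U) *ᵥ y = y
    rw [← Matrix.mulVec_mulVec, ← Matrix.mulVec_mulVec, ← hw, hiw, hUw]
  -- Q₀ * Q = Q
  have hQ₀Q : Q₀ * Q = Q := by
    apply matrix_ext_mulVec
    intro x
    rw [← Matrix.mulVec_mulVec]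
    exact hQ₀fix _ (hQrange x)
  -- symmetry
  have hQT : Qᵀ = Q := by
    ext i j
    rw [Matrix.transpose_apply]
    exact (show Q i j = Q j i by simpa using hQsym.apply j i).symm
  have hQ₀T : Q₀ᵀ = Q₀ := by
    ext i j
    rw [Matrix.transpose_apply, hQ₀, conj_apply, conj_apply]
    exact Finset.sum_congr rfl fun m _ => by ring
  -- conclude Q = Q₀
  have hQQ₀' : Q * Q₀ = Q := by
    have h := congrArg Matrix.transpose hQ₀Q
    rw [Matrix.transpose_mul, hQT, hQ₀T] at h
    exact h
  have : Q = Q₀ := by rw [← hQQ₀', hQQ₀]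
  intro i j
  rw [this]
  exact hQ₀nonneg i j


lemma gaussian_transfer {Ω : Type*} [MeasurableSpace Ω] {μ : Measure Ω} {X : Ω → ℝ} {w : ℝ≥0}
    (h : μ.map X = gaussianReal 0 w) :
    AEMeasurable X μ ∧ Integrable (fun ω => X ω ^ 2) μ ∧
      Integrable (fun ω => X ω * |X ω|) μ ∧
      (∫ ω, X ω ^ 2 ∂μ) = w ∧ (∫ ω, X ω * |X ω| ∂μ) = 0 := by
  have hXm : AEMeasurable X μ := aemeasurable_of_map_neZero (by rw [h]; infer_instance)
  have hsq_m : AEStronglyMeasurable (fun x : ℝ => x ^ 2) (μ.map X) :=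
    (continuous_pow 2).measurable.aestronglyMeasurable
  have hodd_m : AEStronglyMeasurable (fun x : ℝ => x * |x|) (μ.map X) :=
    (continuous_id.mul continuous_abs).measurable.aestronglyMeasurable
  have hint : Integrable (fun ω => X ω ^ 2) μ := by
    have h2 : Integrable (fun x : ℝ => x ^ 2) (μ.map X) := by
      rw [h]; exact gaussianReal_sq_integrable w
    exact (integrable_map_measure hsq_m hXm).mp h2
  have hXabs : AEMeasurable (fun ω => |X ω|) μ := continuous_abs.measurable.comp_aemeasurable hXm
  have hioddint : Integrable (fun ω => X ω * |X ω|) μ := by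
    refine hint.mono' (hXm.mul hXabs).aestronglyMeasurable (ae_of_all _ fun ω => ?_)
    rw [Real.norm_eq_abs, abs_mul, abs_abs]
    exact le_of_eq (by rw [← sq, sq_abs])
  have hval : (∫ ω, X ω ^ 2 ∂μ) = w := by
    have h3 := integral_map hXm hsq_m
    rw [h, gaussianReal_sq_integral] at h3
    exact h3.symm
  have hoddval : (∫ ω, X ω * |X ω| ∂μ) = 0 := by
    have h3 := integral_map hXm hodd_m
    rw [h, gaussianReal_odd_integral] at h3
    exact h3.symm
  exact ⟨hXm, hint, hioddint, hval, hoddval⟩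

lemma abs_mul_abs_sub_le (x y : ℝ) : abs (x * |x| - y * |y|) ≤ (|x| + |y|) * |x - y| := by
  have h1 : x * |x| - y * |y| = x * (|x| - |y|) + (x - y) * |y| := by ring
  calc abs (x * |x| - y * |y|) = abs (x * (|x| - |y|) + (x - y) * |y|) := by rw [h1]
    _ ≤ abs (x * (|x| - |y|)) + abs ((x - y) * |y|) := abs_add_le _ _
    _ = |x| * abs (|x| - |y|) + |x - y| * |y| := by rw [abs_mul, abs_mul, abs_abs]
    _ ≤ |x| * |x - y| + |x - y| * |y| := by
        have := abs_abs_sub_abs_le_abs_sub x y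
        have h2 := mul_le_mul_of_nonneg_left this (abs_nonneg x)
        linarith
    _ = (|x| + |y|) * |x - y| := by ring

/-- The key limiting argument: if `∫ (b + t a)|b + t a| = 0` for all `t`, then `∫ a |b| = 0`. -/
lemma integral_mul_abs_eq_zero {Ω : Type*} [MeasurableSpace Ω] {μ : Measure Ω}
    (a b : Ω → ℝ) (ha : AEMeasurable a μ) (hb : AEMeasurable b μ)
    (ha2 : Integrable (fun ω => a ω ^ 2) μ)
    (hab : Integrable (fun ω => a ω * b ω) μ)
    (hint : ∀ t : ℝ, Integrable (fun ω => (b ω + t * a ω) * |b ω + t * a ω|) μ)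
    (hval : ∀ t : ℝ, ∫ ω, (b ω + t * a ω) * |b ω + t * a ω| ∂μ = 0) :
    ∫ ω, a ω * |b ω| ∂μ = 0 := by
  set F : ℕ → Ω → ℝ := fun n ω =>
    (n : ℝ) * ((b ω + (1/(n:ℝ)) * a ω) * |b ω + (1/(n:ℝ)) * a ω| - b ω * |b ω|) with hF
  have hb0 : Integrable (fun ω => b ω * |b ω|) μ := by
    have := hint 0
    simpa using this
  have hb0val : ∫ ω, b ω * |b ω| ∂μ = 0 := by
    have := hval 0
    simpa using this
  have hFint : ∀ n : ℕ, ∫ ω, F n ω ∂μ = 0 := by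
    intro n
    show ∫ ω, (n:ℝ) * ((b ω + (1/(n:ℝ)) * a ω) * |b ω + (1/(n:ℝ)) * a ω| - b ω * |b ω|) ∂μ = 0
    rw [integral_const_mul, integral_sub (hint (1/(n:ℝ))) hb0, hval (1/(n:ℝ)), hb0val]
    ring
  set bound : Ω → ℝ := fun ω => 2 * |a ω * b ω| + a ω ^ 2 with hbound
  have hboundint : Integrable bound μ := (hab.abs.const_mul 2).add ha2
  have hFmeas : ∀ n : ℕ, AEStronglyMeasurable (F n) μ := by
    intro n
    have h1 : AEMeasurable (fun ω => b ω + (1/(n:ℝ)) * a ω) μ := hb.add (ha.const_mul _)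
    have h1a : AEMeasurable (fun ω => |b ω + (1/(n:ℝ)) * a ω|) μ :=
      continuous_abs.measurable.comp_aemeasurable h1
    have hba : AEMeasurable (fun ω => |b ω|) μ := continuous_abs.measurable.comp_aemeasurable hb
    exact (((h1.mul h1a).sub (hb.mul hba)).const_mul _).aestronglyMeasurable
  have hFbound : ∀ n : ℕ, ∀ᵐ ω ∂μ, ‖F n ω‖ ≤ bound ω := by
    intro n
    refine ae_of_all _ fun ω => ?_
    rcases Nat.eq_zero_or_pos n with hn | hn
    · subst hn
      simp only [hF, Nat.cast_zero, zero_mul, norm_zero, hbound]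
      have : |a ω * b ω| ≥ 0 := abs_nonneg _
      nlinarith [sq_nonneg (a ω)]
    · have hn1 : (1:ℝ) ≤ (n:ℝ) := by exact_mod_cast hn
      have hnpos : (0:ℝ) < (n:ℝ) := by linarith
      set x := b ω + (1/(n:ℝ)) * a ω
      set y := b ω
      have h1 : abs (x * |x| - y * |y|) ≤ (|x| + |y|) * |x - y| := abs_mul_abs_sub_le x y
      have h2 : x - y = (1/(n:ℝ)) * a ω := by simp [x, y]
      have h3 : |x - y| = (1/(n:ℝ)) * |a ω| := by
        rw [h2, abs_mul, abs_of_nonneg (by positivity : (0:ℝ) ≤ 1/(n:ℝ))]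
      have h4 : |x| ≤ |y| + |a ω| := by
        have : |x| ≤ |y| + (1/(n:ℝ)) * |a ω| := by
          calc |x| ≤ |y| + |(1/(n:ℝ)) * a ω| := abs_add_le _ _
            _ = |y| + (1/(n:ℝ)) * |a ω| := by
                rw [abs_mul, abs_of_nonneg (by positivity : (0:ℝ) ≤ 1/(n:ℝ))]
        have h5 : (1/(n:ℝ)) * |a ω| ≤ |a ω| := by
          rw [div_mul_eq_mul_div, one_mul, div_le_iff₀ hnpos]
          nlinarith [abs_nonneg (a ω)]
        linarith
      have h6 : ‖F n ω‖ = (n:ℝ) * abs (x * |x| - y * |y|) := by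
        show abs ((n:ℝ) * (x * |x| - y * |y|)) = (n:ℝ) * abs (x * |x| - y * |y|)
        rw [abs_mul, Nat.abs_cast]
      rw [h6]
      calc (n:ℝ) * abs (x * |x| - y * |y|) ≤ (n:ℝ) * ((|x| + |y|) * ((1/(n:ℝ)) * |a ω|)) := by
            rw [← h3]
            exact mul_le_mul_of_nonneg_left h1 hnpos.le
        _ = (|x| + |y|) * |a ω| := by field_simp
        _ ≤ (|y| + |a ω| + |y|) * |a ω| := by
            apply mul_le_mul_of_nonneg_right _ (abs_nonneg _)
            linarith
        _ ≤ bound ω := by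
            rw [hbound]
            simp only [y]
            have habs : |a ω * b ω| = |a ω| * |b ω| := abs_mul _ _
            nlinarith [abs_nonneg (a ω), abs_nonneg (b ω), sq_abs (a ω)]
  have hFlim : ∀ᵐ ω ∂μ, Tendsto (fun n => F n ω) atTop (nhds (2 * (a ω * |b ω|))) := by
    refine ae_of_all _ fun ω => ?_
    by_cases hα : a ω = 0
    · have hzero : ∀ n : ℕ, F n ω = 0 := fun n => by simp [hF, hα]
      rw [hα]
      norm_num
      simpa [hzero] using (tendsto_const_nhds : Tendsto (fun _ : ℕ => (0:ℝ)) atTop (nhds 0))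
    · set g : ℝ → ℝ := fun t => (b ω + t * a ω) * |b ω + t * a ω| with hg
      have hinner : HasDerivAt (fun t : ℝ => b ω + t * a ω) (a ω) 0 := by
        simpa using ((hasDerivAt_id (0:ℝ)).mul_const (a ω)).const_add (b ω)
      have hd : HasDerivAt g (2 * |b ω| * a ω) 0 := by
        have h1 := (hasDerivAt_mul_abs (b ω + 0 * a ω)).comp 0 hinner
        simp only [zero_mul, add_zero] at h1
        exact h1
      have hs := hasDerivAt_iff_tendsto_slope.mp hd
      have htn : Tendsto (fun n : ℕ => 1/(n:ℝ)) atTop (nhdsWithin 0 {(0:ℝ)}ᶜ) := by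
        apply tendsto_nhdsWithin_of_tendsto_nhds_of_eventually_within _
          tendsto_one_div_atTop_nhds_zero_nat
        filter_upwards [eventually_ge_atTop 1] with n hn
        have : (0:ℝ) < (n:ℝ) := by exact_mod_cast hn
        simp only [Set.mem_compl_iff, Set.mem_singleton_iff]
        positivity
      have hcomp := hs.comp htn
      have heq : (fun n : ℕ => slope g 0 (1/(n:ℝ))) =ᶠ[atTop] (fun n => F n ω) := by
        filter_upwards [eventually_ge_atTop 1] with n hn
        have e0 : g 0 = b ω * |b ω| := by norm_num [hg]
        rw [slope_def_field, sub_zero, one_div, div_inv_eq_mul, e0]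
        show ((b ω + ((n:ℝ))⁻¹ * a ω) * abs (b ω + ((n:ℝ))⁻¹ * a ω) - b ω * |b ω|) * (n:ℝ)
          = (n:ℝ) * ((b ω + 1/(n:ℝ) * a ω) * abs (b ω + 1/(n:ℝ) * a ω) - b ω * |b ω|)
        rw [one_div]
        ring
      have hres := hcomp.congr' heq
      have hfin : (2:ℝ) * |b ω| * a ω = 2 * (a ω * |b ω|) := by ring
      rw [hfin] at hres
      exact hres
  have hDCT := tendsto_integral_of_dominated_convergence bound hFmeas hboundint hFbound hFlim
  have hzero : Tendsto (fun n : ℕ => ∫ ω, F n ω ∂μ) atTop (nhds 0) := by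
    simp only [hFint]; exact tendsto_const_nhds
  have hlimval : ∫ ω, 2 * (a ω * |b ω|) ∂μ = 0 := tendsto_nhds_unique hDCT hzero
  rw [integral_const_mul] at hlimval
  linarith


/-- `z` is a centered Gaussian vector with covariance matrix `K`. -/
def IsCenteredGaussianVec {Ω V : Type*} [MeasurableSpace Ω] [Fintype V] (μ : Measure Ω)
    (z : Ω → V → ℝ) (K : Matrix V V ℝ) : Prop :=
  ∀ c : V → ℝ,
    μ.map (fun ω => ∑ v, c v * z ω v) =
      gaussianReal 0 (∑ v₁, ∑ v₂, c v₁ * K v₁ v₂ * c v₂).toNNReal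

/-- For a centered Gaussian vector `z` with covariance `K`, a symmetric
matrix `P` with nonnegative entries, `Π₁` the orthogonal projection onto the top eigenspace
of `P` (for `λ₁ = ⨆ i, eigenvalues i`), and `K' = c · P·E[σ(z)σ(z)ᵀ]·P` with `c > 0`,
`tr(K'·Π₁) ≥ (c/2)·λ₁(P)²·tr(K·Π₁)`. -/
theorem trace_top_eigenspace_lower_bound
    {Ω V : Type*} [MeasurableSpace Ω] [Fintype V] [DecidableEq V] [Nonempty V]
    (μ : Measure Ω) [IsProbabilityMeasure μ]
    (z : Ω → V → ℝ) (K : Matrix V V ℝ) (hz : IsCenteredGaussianVec μ z K)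
    (P : Matrix V V ℝ) (hP : P.IsHermitian) (hpos : ∀ v₁ v₂, 0 ≤ P v₁ v₂)
    (Q : Matrix V V ℝ) (hQsym : Q.IsHermitian) (hQidem : Q * Q = Q)
    (hQrange : ∀ x : V → ℝ,
      P.mulVec (Q.mulVec x) = (⨆ i, hP.eigenvalues i) • Q.mulVec x)
    (hQfix : ∀ x : V → ℝ, P.mulVec x = (⨆ i, hP.eigenvalues i) • x → Q.mulVec x = x)
    (c : ℝ) (hc : 0 < c)
    (K' : Matrix V V ℝ)
    (hK' : K' = c • (P * Matrix.of (fun v₁ v₂ => ∫ ω, max (z ω v₁) 0 * max (z ω v₂) 0 ∂μ) * P)) :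
    (c / 2) * (⨆ i, hP.eigenvalues i) ^ 2 * (K * Q).trace ≤ (K' * Q).trace := by
  classical
  have hQnn : ∀ i j, 0 ≤ Q i j := proj_entries_nonneg P hP hpos Q hQsym hQrange hQfix
  set lam : ℝ := ⨆ i, hP.eigenvalues i with hlamdef
  set Mm : Matrix V V ℝ :=
    Matrix.of (fun v₁ v₂ => ∫ ω, max (z ω v₁) 0 * max (z ω v₂) 0 ∂μ) with hMm
  set Kt : Matrix V V ℝ := Matrix.of (fun i j => ∫ ω, z ω i * z ω j ∂μ) with hKt
  have hMmapp : ∀ i j, Mm i j = ∫ ω, max (z ω i) 0 * max (z ω j) 0 ∂μ := fun _ _ => rfl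
  have hKtapp : ∀ i j, Kt i j = ∫ ω, z ω i * z ω j ∂μ := fun _ _ => rfl
  -- transfer facts for arbitrary coefficient vector
  have hzc := fun cc : V → ℝ => gaussian_transfer (hz cc)
  -- single coordinates
  have hsingle : ∀ (v : V) (ω : Ω), ∑ u, (Pi.single v (1:ℝ) : V → ℝ) u * z ω u = z ω v := by
    intro v ω
    simp [Pi.single_apply, ite_mul]
  have hzm : ∀ v, AEMeasurable (fun ω => z ω v) μ := by
    intro v
    have h := (hzc (Pi.single v 1)).1
    simp only [hsingle] at h
    exact h
  have hz2 : ∀ v, Integrable (fun ω => (z ω v)^2) μ := by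
    intro v
    have h := (hzc (Pi.single v 1)).2.1
    simp only [hsingle] at h
    exact h
  -- pair linear combinations
  have hpair : ∀ (i j : V) (t : ℝ) (ω : Ω),
      ∑ u, ((Pi.single j (1:ℝ) : V → ℝ) u + t * (Pi.single i (1:ℝ) : V → ℝ) u) * z ω u = z ω j + t * z ω i := by
    intro i j t ω
    simp only [add_mul, Finset.sum_add_distrib]
    congr 1
    · simp [Pi.single_apply, ite_mul]
    · simp only [mul_assoc, ← Finset.mul_sum]
      congr 1
      simp [Pi.single_apply, ite_mul]
  -- integrability of products
  have hzz : ∀ i j, Integrable (fun ω => z ω i * z ω j) μ := by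
    intro i j
    have hB : Integrable (fun ω => (z ω i ^ 2 + z ω j ^ 2)/2) μ :=
      ((hz2 i).add (hz2 j)).div_const 2
    refine hB.mono'
      ((hzm i).mul (hzm j)).aestronglyMeasurable (ae_of_all _ fun ω => ?_)
    rw [Real.norm_eq_abs, abs_mul]
    nlinarith [sq_nonneg (|z ω i| - |z ω j|), sq_abs (z ω i), sq_abs (z ω j),
      abs_nonneg (z ω i), abs_nonneg (z ω j)]
  have habs_m : ∀ v, AEMeasurable (fun ω => |z ω v|) μ :=
    fun v => continuous_abs.measurable.comp_aemeasurable (hzm v)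
  have hzabs : ∀ i j, Integrable (fun ω => z ω i * |z ω j|) μ := by
    intro i j
    refine (hzz i j).abs.mono' ((hzm i).mul (habs_m j)).aestronglyMeasurable
      (ae_of_all _ fun ω => ?_)
    rw [Real.norm_eq_abs, abs_mul, abs_abs, abs_mul]
  have habsabs : ∀ i j, Integrable (fun ω => |z ω i| * |z ω j|) μ :=
    fun i j => (hzz i j).abs.congr (ae_of_all _ fun ω => abs_mul _ _)
  have hmax : ∀ x : ℝ, max x 0 = (x + |x|)/2 := by
    intro x
    rcases le_total x 0 with h|h
    · rw [max_eq_right h, abs_of_nonpos h]; ring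
    · rw [max_eq_left h, abs_of_nonneg h]; ring
  have hsig : ∀ i j, Integrable (fun ω => max (z ω i) 0 * max (z ω j) 0) μ := by
    intro i j
    refine (hzz i j).abs.mono'
      (((hzm i).max aemeasurable_const).mul ((hzm j).max aemeasurable_const)).aestronglyMeasurable
      (ae_of_all _ fun ω => ?_)
    rw [Real.norm_eq_abs, abs_mul]
    have h1 : ∀ x : ℝ, |max x 0| ≤ |x| := by
      intro x
      rw [abs_of_nonneg (le_max_right x 0)]
      exact max_le (le_abs_self x) (abs_nonneg x)
    calc |max (z ω i) 0| * |max (z ω j) 0| ≤ |z ω i| * |z ω j| :=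
          mul_le_mul (h1 _) (h1 _) (abs_nonneg _) (abs_nonneg _)
      _ = |z ω i * z ω j| := (abs_mul _ _).symm
  -- cross terms vanish
  have hcross : ∀ i j, ∫ ω, z ω i * |z ω j| ∂μ = 0 := by
    intro i j
    refine integral_mul_abs_eq_zero (fun ω => z ω i) (fun ω => z ω j)
      (hzm i) (hzm j) (hz2 i) ?_ ?_ ?_
    · exact (hzz i j).congr (ae_of_all _ fun ω => by ring)
    · intro t
      have h := (hzc (fun u => (Pi.single j (1:ℝ) : V → ℝ) u + t * (Pi.single i (1:ℝ) : V → ℝ) u)).2.2.1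
      simp only [hpair] at h
      exact h
    · intro t
      have h := (hzc (fun u => (Pi.single j (1:ℝ) : V → ℝ) u + t * (Pi.single i (1:ℝ) : V → ℝ) u)).2.2.2.2
      simp only [hpair] at h
      exact h
  -- entrywise bound : Kt ≤ 2 Mm
  have hMK : ∀ i j, Kt i j ≤ 2 * Mm i j := by
    intro i j
    have hid : (fun ω => max (z ω i) 0 * max (z ω j) 0)
        = fun ω => (z ω i * z ω j + z ω i * |z ω j| + |z ω i| * z ω j + |z ω i| * |z ω j|)/4 := by
      funext ω
      rw [hmax (z ω i), hmax (z ω j)]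
      ring
    have e1 : Mm i j = (∫ ω, z ω i * z ω j ∂μ + ∫ ω, z ω i * |z ω j| ∂μ
        + ∫ ω, |z ω i| * z ω j ∂μ + ∫ ω, |z ω i| * |z ω j| ∂μ)/4 := by
      rw [hMmapp, hid]
      have hzabs' : Integrable (fun ω => |z ω i| * z ω j) μ :=
        (hzabs j i).congr (ae_of_all _ fun ω => by ring)
      have I2 : Integrable (fun ω => z ω i * z ω j + z ω i * |z ω j|) μ :=
        (hzz i j).add (hzabs i j)
      have I1 : Integrable
          (fun ω => z ω i * z ω j + z ω i * |z ω j| + |z ω i| * z ω j) μ := I2.add hzabs'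
      rw [integral_div, integral_add I1 (habsabs i j), integral_add I2 hzabs',
        integral_add (hzz i j) (hzabs i j)]
    have e2 : ∫ ω, |z ω i| * z ω j ∂μ = 0 := by
      rw [show (fun ω => |z ω i| * z ω j) = fun ω => z ω j * |z ω i| from funext fun ω => by ring]
      exact hcross j i
    have e3 : ∫ ω, z ω i * z ω j ∂μ ≤ ∫ ω, |z ω i| * |z ω j| ∂μ := by
      refine integral_mono (hzz i j) (habsabs i j) fun ω => ?_
      calc z ω i * z ω j ≤ |z ω i * z ω j| := le_abs_self _
        _ = |z ω i| * |z ω j| := abs_mul _ _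
    rw [e1, hcross i j, e2, hKtapp]
    linarith
  -- quadratic form bound
  have hquad : ∀ x : V → ℝ,
      (∑ i, ∑ j, x i * K i j * x j) ≤ ∑ i, ∑ j, x i * Kt i j * x j := by
    intro x
    have h1 := (hzc x).2.2.2.1
    have h2 : ∫ ω, (∑ v, x v * z ω v)^2 ∂μ = ∑ i, ∑ j, x i * Kt i j * x j := by
      have e : ∀ ω, (∑ v, x v * z ω v)^2 = ∑ i, ∑ j, (x i * x j) * (z ω i * z ω j) := by
        intro ω
        rw [sq, Finset.sum_mul_sum]
        exact Finset.sum_congr rfl fun i _ => Finset.sum_congr rfl fun j _ => by ring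
      simp_rw [e]
      rw [integral_finset_sum _ (fun i _ =>
        integrable_finset_sum _ (fun j _ => (hzz i j).const_mul _))]
      refine Finset.sum_congr rfl fun i _ => ?_
      rw [integral_finset_sum _ (fun j _ => (hzz i j).const_mul _)]
      refine Finset.sum_congr rfl fun j _ => ?_
      rw [integral_const_mul, hKtapp]
      ring
    have h3 : (∑ v₁, ∑ v₂, x v₁ * K v₁ v₂ * x v₂)
        ≤ ((∑ v₁, ∑ v₂, x v₁ * K v₁ v₂ * x v₂).toNNReal : ℝ) := Real.le_coe_toNNReal _
    rw [← h1, h2] at h3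
    exact h3
  -- matrix manipulations
  have hQT : Qᵀ = Q := by
    ext i j
    rw [Matrix.transpose_apply]
    exact (show Q i j = Q j i by simpa using hQsym.apply j i).symm
  have hPT : Pᵀ = P := by
    ext i j
    rw [Matrix.transpose_apply]
    exact (show P i j = P j i by simpa using hP.apply j i).symm
  have hPQ : P * Q = lam • Q := by
    apply matrix_ext_mulVec
    intro x
    rw [← Matrix.mulVec_mulVec, hQrange x, ← Matrix.smul_mulVec]
  have hQP : Q * P = lam • Q := by
    have h := congrArg Matrix.transpose hPQ
    rwa [Matrix.transpose_mul, hPT, hQT, Matrix.transpose_smul, hQT] at h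
  have htr1 : (K' * Q).trace = c * (lam * (lam * (Mm * Q).trace)) := by
    rw [hK', Matrix.smul_mul, Matrix.trace_smul, smul_eq_mul]
    congr 1
    rw [Matrix.mul_assoc (P * Mm) P Q, hPQ, mul_smul_comm, Matrix.trace_smul, smul_eq_mul]
    congr 1
    rw [Matrix.mul_assoc P Mm Q, Matrix.trace_mul_comm P (Mm * Q), Matrix.mul_assoc Mm Q P,
      hQP, mul_smul_comm, Matrix.trace_smul, smul_eq_mul]
  have trace_expand : ∀ A B : Matrix V V ℝ, (A * B).trace = ∑ i, ∑ j, A i j * B j i := by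
    intro A B
    simp [Matrix.trace, Matrix.diag, Matrix.mul_apply]
  have htr2 : (Kt * Q).trace ≤ 2 * (Mm * Q).trace := by
    rw [trace_expand, trace_expand, Finset.mul_sum]
    refine Finset.sum_le_sum fun i _ => ?_
    rw [Finset.mul_sum]
    refine Finset.sum_le_sum fun j _ => ?_
    have h := mul_le_mul_of_nonneg_right (hMK i j) (hQnn j i)
    rw [mul_assoc] at h
    exact h
  have htr3 : (K * Q).trace ≤ (Kt * Q).trace := by
    have key : ∀ A : Matrix V V ℝ,
        (A * Q).trace = ∑ j, ∑ i, ∑ m, Q i j * A i m * Q m j := by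
      intro A
      have h1 : A * Q = (A * Q) * Q := by rw [Matrix.mul_assoc, hQidem]
      rw [h1, Matrix.trace_mul_comm (A * Q) Q, trace_expand]
      refine Finset.sum_congr rfl fun j _ => ?_
      simp_rw [Matrix.mul_apply, Finset.mul_sum]
      refine Finset.sum_congr rfl fun i _ => Finset.sum_congr rfl fun m _ => ?_
      have hQs : Q j i = Q i j := by
        have h2 := congrFun (congrFun hQT j) i
        simpa [Matrix.transpose_apply] using h2.symm
      rw [hQs]
      ring
    rw [key K, key Kt]
    refine Finset.sum_le_sum fun j _ => ?_
    have hq := hquad (fun i => Q i j)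
    calc (∑ i, ∑ m, Q i j * K i m * Q m j)
        = ∑ i, ∑ m, (fun i => Q i j) i * K i m * (fun i => Q i j) m := by
          exact Finset.sum_congr rfl fun i _ => Finset.sum_congr rfl fun m _ => rfl
      _ ≤ ∑ i, ∑ m, (fun i => Q i j) i * Kt i m * (fun i => Q i j) m := hq
      _ = ∑ i, ∑ m, Q i j * Kt i m * Q m j := by
          exact Finset.sum_congr rfl fun i _ => Finset.sum_congr rfl fun m _ => rfl
  -- final chain
  rw [htr1]
  have h2 : (K * Q).trace ≤ 2 * (Mm * Q).trace := le_trans htr3 htr2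
  have hcl : (0:ℝ) ≤ (c/2) * lam^2 := by positivity
  calc (c/2) * lam^2 * (K * Q).trace ≤ (c/2) * lam^2 * (2 * (Mm * Q).trace) :=
        mul_le_mul_of_nonneg_left h2 hcl
    _ = c * (lam * (lam * (Mm * Q).trace)) := by ring
end
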